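/- arXiv:1605.00668 — 2 statements merged into one kernel-verified Lean document; each statement's English description precedes it below -/
import Mathlib

section
/- Fix a positive integer N and a real ν > 0. As ρ → 0⁺, the one-bit upper bound satisfies 2N(1 − H_b(Q(√(ρν²/N)))) = (2/π)·(ρν²/ln 2) + o(ρ). -/
open MeasureTheory Filter Asymptotics

/-- The standard normal tail function `Q(t) = ∫ₜ^∞ (1/√(2π)) e^{-u²/2} du`. -/
noncomputable def Qfun (t : ℝ) : ℝ :=
  ∫ u in Set.Ioi t, (Real.sqrt (2 * Real.pi))⁻¹ * Real.exp (-(u ^ 2) / 2)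

/-- The binary entropy function `H_b(p) = -p log₂ p - (1-p) log₂ (1-p)`. -/
noncomputable def binEnt (p : ℝ) : ℝ :=
  -(p * Real.logb 2 p) - (1 - p) * Real.logb 2 (1 - p)

noncomputable def phi (u : ℝ) : ℝ := (Real.sqrt (2 * Real.pi))⁻¹ * Real.exp (-(u ^ 2) / 2)

lemma continuous_phi : Continuous phi := by
  unfold phi; fun_prop

lemma integrable_phi : Integrable phi := by
  have h := (integrable_exp_neg_mul_sq (by norm_num : (0:ℝ) < 1/2)).const_mul
      (Real.sqrt (2 * Real.pi))⁻¹
  refine h.congr (Eventually.of_forall fun x => ?_)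
  unfold phi; ring_nf

lemma Qfun_eq_phi (t : ℝ) : Qfun t = ∫ u in Set.Ioi t, phi u := rfl

lemma Qfun_split {a b : ℝ} (hab : a ≤ b) :
    Qfun a = (∫ u in Set.Ioc a b, phi u) + Qfun b := by
  rw [Qfun_eq_phi, Qfun_eq_phi, ← setIntegral_union (Set.Ioc_disjoint_Ioi le_rfl)
    measurableSet_Ioi integrable_phi.integrableOn integrable_phi.integrableOn,
    Set.Ioc_union_Ioi_eq_Ioi hab]

lemma Qfun_eq (t : ℝ) : Qfun t = Qfun 0 - ∫ u in (0:ℝ)..t, phi u := by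
  rcases le_or_gt 0 t with h | h
  · rw [intervalIntegral.integral_of_le h, Qfun_split h]; ring
  · rw [intervalIntegral.integral_of_ge h.le, Qfun_split h.le]; ring

lemma hasDerivAt_Qfun (t : ℝ) : HasDerivAt Qfun (-(phi t)) t := by
  have h : HasDerivAt (fun u => ∫ x in (0:ℝ)..u, phi x) (phi t) t :=
    intervalIntegral.integral_hasDerivAt_right integrable_phi.intervalIntegrable
      (continuous_phi.stronglyMeasurable.stronglyMeasurableAtFilter)
      continuous_phi.continuousAt
  have := (hasDerivAt_const t (Qfun 0)).sub h
  simpa [zero_sub] using this.congr_of_eventuallyEq (Eventually.of_forall fun x => (Qfun_eq x))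

lemma phi_zero : phi 0 = (Real.sqrt (2 * Real.pi))⁻¹ := by simp [phi]

lemma sq_phi_zero : phi 0 ^ 2 = (2 * Real.pi)⁻¹ := by
  rw [phi_zero, ← Real.sqrt_inv, Real.sq_sqrt (by positivity)]

lemma Qfun_zero : Qfun 0 = 1 / 2 := by
  rw [Qfun_eq_phi]
  unfold phi
  rw [integral_const_mul]
  have : ∀ u : ℝ, Real.exp (-(u ^ 2) / 2) = Real.exp (-(1/2) * u ^ 2) := by
    intro u; ring_nf
  simp_rw [this]
  rw [integral_gaussian_Ioi]
  rw [show Real.pi / (1/2) = 2 * Real.pi by ring]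
  rw [inv_mul_eq_div, div_div]
  rw [div_eq_div_iff (by positivity) (by norm_num)]
  rw [one_mul, ← Real.sqrt_mul_self (by positivity : (0:ℝ) ≤ Real.sqrt (2*Real.pi))]
  ring_nf

lemma binEnt_eq (p : ℝ) : binEnt p = Real.binEntropy p / Real.log 2 := by
  simp only [binEnt, Real.binEntropy, Real.log_inv, Real.logb]
  ring

lemma binEnt_half : binEnt (1/2) = 1 := by
  rw [binEnt_eq, show (1:ℝ)/2 = 2⁻¹ by norm_num, Real.binEntropy_two_inv,
    div_self (Real.log_ne_zero_of_pos_of_ne_one (by norm_num) (by norm_num))]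

lemma continuous_binEnt : Continuous binEnt := by
  have : binEnt = fun p => Real.binEntropy p / Real.log 2 := funext binEnt_eq
  rw [this]
  exact Real.binEntropy_continuous.div_const _

lemma eventually_Q_mem : ∀ᶠ t in nhds (0:ℝ), Qfun t ∈ Set.Ioo (0:ℝ) 1 := by
  have hc : ContinuousAt Qfun 0 := (hasDerivAt_Qfun 0).continuousAt
  have : Set.Ioo (0:ℝ) 1 ∈ nhds (Qfun 0) := by
    rw [Qfun_zero]; exact isOpen_Ioo.mem_nhds (by norm_num)
  exact hc this

lemma hasDerivAt_g {t : ℝ} (h0 : Qfun t ≠ 0) (h1 : Qfun t ≠ 1) :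
    HasDerivAt (fun s => 1 - binEnt (Qfun s))
      ((Real.log (1 - Qfun t) - Real.log (Qfun t)) * phi t / Real.log 2) t := by
  have hb := (Real.hasDerivAt_binEntropy h0 h1).comp t (hasDerivAt_Qfun t)
  have h2 := (hb.div_const (Real.log 2)).const_sub 1
  have he : (fun s => 1 - binEnt (Qfun s))
      = fun s => 1 - Real.binEntropy (Qfun s) / Real.log 2 := by
    funext s; rw [binEnt_eq]
  rw [he]
  exact h2.congr_deriv (by ring)

lemma core : Tendsto (fun t => (1 - binEnt (Qfun t)) / t ^ 2) (nhdsWithin 0 (Set.Ioi 0))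
    (nhds (1 / (Real.pi * Real.log 2))) := by
  have hL : Real.log 2 ≠ 0 := Real.log_ne_zero_of_pos_of_ne_one (by norm_num) (by norm_num)
  have hπ : Real.pi ≠ 0 := Real.pi_ne_zero
  -- the slope limit for k
  set k : ℝ → ℝ := fun t => Real.log (1 - Qfun t) - Real.log (Qfun t) with hk_def
  have hQ0 : Qfun 0 = 1/2 := Qfun_zero
  have h12 : (1:ℝ) - 1/2 = 1/2 := by norm_num
  have hk0 : k 0 = 0 := by
    simp [hk_def, hQ0, h12]
    rw [show (1:ℝ) - 2⁻¹ = 2⁻¹ by norm_num, Real.log_inv]; ring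
  have hone : HasDerivAt (fun t => 1 - Qfun t) (phi 0) 0 := by
    simpa using (hasDerivAt_Qfun 0).const_sub 1
  have hlog1 : HasDerivAt (fun t => Real.log (1 - Qfun t)) ((1 - Qfun 0)⁻¹ * phi 0) 0 :=
    (Real.hasDerivAt_log (by rw [hQ0]; norm_num)).comp 0 hone
  have hlog2 : HasDerivAt (fun t => Real.log (Qfun t)) ((Qfun 0)⁻¹ * -(phi 0)) 0 :=
    (Real.hasDerivAt_log (by rw [hQ0]; norm_num)).comp 0 (hasDerivAt_Qfun 0)
  have hk : HasDerivAt k (4 * phi 0) 0 := by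
    have := hlog1.sub hlog2
    refine this.congr_deriv ?_
    rw [hQ0]; norm_num; try ring
  have hslope : Tendsto (fun t => k t / t) (nhdsWithin 0 (Set.Ioi 0)) (nhds (4 * phi 0)) := by
    have := hasDerivAt_iff_tendsto_slope.mp hk
    have h2 : Tendsto (slope k 0) (nhdsWithin 0 (Set.Ioi 0)) (nhds (4 * phi 0)) :=
      this.mono_left (nhdsWithin_mono 0 (fun x hx => ne_of_gt hx))
    refine h2.congr fun t => ?_
    simp [slope_def_field, hk0]
    try ring
  have hphi : Tendsto (fun t => phi t / (2 * Real.log 2)) (nhdsWithin 0 (Set.Ioi 0))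
      (nhds (phi 0 / (2 * Real.log 2))) :=
    ((continuous_phi.continuousAt.div_const _).tendsto).mono_left nhdsWithin_le_nhds
  have hdiv : Tendsto (fun t => ((Real.log (1 - Qfun t) - Real.log (Qfun t)) * phi t
      / Real.log 2) / (2 * t)) (nhdsWithin 0 (Set.Ioi 0))
      (nhds (1 / (Real.pi * Real.log 2))) := by
    have hmul := hslope.mul hphi
    have hval : 4 * phi 0 * (phi 0 / (2 * Real.log 2)) = 1 / (Real.pi * Real.log 2) := by
      have h2 : phi 0 * phi 0 = (2 * Real.pi)⁻¹ := by
        rw [← sq_phi_zero]; ring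
      rw [show 4 * phi 0 * (phi 0 / (2 * Real.log 2))
          = 2 * (phi 0 * phi 0) / Real.log 2 by ring, h2]
      field_simp
    rw [hval] at hmul
    refine hmul.congr fun t => ?_
    rcases eq_or_ne t 0 with rfl | ht
    · simp
    · rw [div_mul_div_comm, div_div]
      simp only [hk_def]; ring
  apply HasDerivAt.lhopital_zero_nhdsGT
    (f' := fun t => (Real.log (1 - Qfun t) - Real.log (Qfun t)) * phi t / Real.log 2)
    (g' := fun t => 2 * t)
  · filter_upwards [eventually_Q_mem.filter_mono nhdsWithin_le_nhds] with t ht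
    exact hasDerivAt_g (ne_of_gt ht.1) (ne_of_lt ht.2)
  · refine Eventually.of_forall fun t => ?_
    simpa using hasDerivAt_pow 2 t
  · filter_upwards [self_mem_nhdsWithin] with t ht
    exact mul_ne_zero two_ne_zero (ne_of_gt ht)
  · have hc : ContinuousAt (fun t => 1 - binEnt (Qfun t)) 0 :=
      continuousAt_const.sub (continuous_binEnt.continuousAt.comp (hasDerivAt_Qfun 0).continuousAt)
    have : Tendsto (fun t => 1 - binEnt (Qfun t)) (nhdsWithin 0 (Set.Ioi 0))
        (nhds (1 - binEnt (Qfun 0))) := hc.tendsto.mono_left nhdsWithin_le_nhds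
    rw [hQ0, binEnt_half] at this
    simpa using this
  · have : Tendsto (fun t : ℝ => t ^ 2) (nhdsWithin 0 (Set.Ioi 0)) (nhds ((0:ℝ) ^ 2)) :=
      ((continuous_pow 2).continuousAt.tendsto).mono_left nhdsWithin_le_nhds
    simpa using this
  · exact hdiv

/-- As `ρ → 0⁺`, the one-bit upper bound satisfies
`2N(1 - H_b(Q(√(ρν²/N)))) = (2/π)·(ρν²/ln 2) + o(ρ)`. -/
theorem oneBit_ub_low_SNR (N : ℕ) (hN : 0 < N) (ν : ℝ) (hν : 0 < ν) :
    (fun ρ : ℝ =>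
        2 * N * (1 - binEnt (Qfun (Real.sqrt (ρ * ν ^ 2 / N)))) -
          2 / Real.pi * (ρ * ν ^ 2 / Real.log 2))
      =o[nhdsWithin 0 (Set.Ioi 0)] (fun ρ : ℝ => ρ) := by
  have hL : Real.log 2 ≠ 0 := Real.log_ne_zero_of_pos_of_ne_one (by norm_num) (by norm_num)
  have hπ : (0:ℝ) < Real.pi := Real.pi_pos
  have hN' : (0:ℝ) < (N:ℝ) := by exact_mod_cast hN
  rw [isLittleO_iff_tendsto']
  swap
  · filter_upwards [self_mem_nhdsWithin] with ρ hρ h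
    exact absurd h (ne_of_gt hρ)
  have htmap : Tendsto (fun ρ : ℝ => Real.sqrt (ρ * ν ^ 2 / N)) (nhdsWithin 0 (Set.Ioi 0))
      (nhdsWithin 0 (Set.Ioi 0)) := by
    apply tendsto_nhdsWithin_of_tendsto_nhds_of_eventually_within
    · have hc : Continuous (fun ρ : ℝ => Real.sqrt (ρ * ν ^ 2 / N)) := by fun_prop
      have h0 : Tendsto (fun ρ : ℝ => Real.sqrt (ρ * ν ^ 2 / N)) (nhdsWithin 0 (Set.Ioi 0))
          (nhds (Real.sqrt (0 * ν ^ 2 / N))) :=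
        (hc.continuousAt (x := (0:ℝ))).tendsto.mono_left nhdsWithin_le_nhds
      simpa using h0
    · filter_upwards [self_mem_nhdsWithin] with ρ hρ
      rw [Set.mem_Ioi] at hρ
      exact Set.mem_Ioi.mpr (Real.sqrt_pos.mpr (by positivity))
  have h1 := core.comp htmap
  have h2 := (h1.const_mul (2 * ν ^ 2)).sub_const (2 / Real.pi * (ν ^ 2 / Real.log 2))
  have hval : 2 * ν ^ 2 * (1 / (Real.pi * Real.log 2)) - 2 / Real.pi * (ν ^ 2 / Real.log 2)
      = 0 := by
    field_simp
    ring
  rw [hval] at h2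
  refine Tendsto.congr' ?_ h2
  filter_upwards [self_mem_nhdsWithin] with ρ hρ
  rw [Set.mem_Ioi] at hρ
  have harg : 0 ≤ ρ * ν ^ 2 / N := by positivity
  have ht2 : (Real.sqrt (ρ * ν ^ 2 / N)) ^ 2 = ρ * ν ^ 2 / N := Real.sq_sqrt harg
  simp only [Function.comp]
  rw [ht2]
  field_simp
end

section
/- AQNM high-SNR bound: Let à be a complex n × m matrix each of whose rows has unit Euclidean norm, and let 0 < η < 1. Then log₂ det(I_m + ((1−η)/η)·Ãᴴà ) ≤ n log₂(1/η). -/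
open Matrix


open Finset in

-- AM-GM step
lemma amgm_step (n : ℕ) (l : Fin n → ℝ) (hl : ∀ i, 0 ≤ l i) (hs : ∑ i, l i = n)
    (c : ℝ) (hc : 0 ≤ c) : ∏ i, (1 + c * l i) ≤ (1 + c) ^ n := by
  rcases Nat.eq_zero_or_pos n with h | h
  · subst h; simp
  have hn : (0:ℝ) < n := by exact_mod_cast h
  have hz : ∀ i ∈ (univ : Finset (Fin n)), (0:ℝ) ≤ 1 + c * l i := fun i _ => by
    have := mul_nonneg hc (hl i); linarith
  have key := Real.geom_mean_le_arith_mean_weighted univ (fun _ => (n:ℝ)⁻¹)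
      (fun i => 1 + c * l i) (fun i _ => by positivity)
      (by simp [Finset.sum_const, Finset.card_univ]; field_simp) hz
  have hrhs : ∑ i : Fin n, (n:ℝ)⁻¹ * (1 + c * l i) = 1 + c := by
    rw [← Finset.mul_sum, Finset.sum_add_distrib, ← Finset.mul_sum, hs]
    simp [Finset.sum_const, Finset.card_univ]
    field_simp
  have hprod : (0:ℝ) ≤ ∏ i, (1 + c * l i) := Finset.prod_nonneg hz
  have hlhs : ∏ i : Fin n, (1 + c * l i) ^ ((n:ℝ)⁻¹) = (∏ i, (1 + c * l i)) ^ ((n:ℝ)⁻¹) := by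
    rw [← Real.finset_prod_rpow _ _ hz]
  rw [hlhs, hrhs] at key
  have h1c : (0:ℝ) ≤ 1 + c := by linarith
  have := Real.rpow_le_rpow (Real.rpow_nonneg hprod _) key (le_of_lt hn)
  rw [← Real.rpow_mul hprod, inv_mul_cancel₀ (ne_of_gt hn), Real.rpow_one,
    Real.rpow_natCast] at this
  exact this

/-- AQNM high-SNR bound: if every row of the complex `n × m` matrix `Ã` has unit
Euclidean norm and `0 < η < 1`, then
`log₂ det(I + ((1−η)/η)·Ãᴴ Ã) ≤ n log₂(1/η)`.  (The determinant of `I` plus a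
positive semidefinite matrix is real, so its real part is taken.) -/
theorem aqnm_high_snr_bound {n m : ℕ} (A : Matrix (Fin n) (Fin m) ℂ)
    (hrows : ∀ i, ∑ j, Complex.normSq (A i j) = 1)
    (η : ℝ) (hη0 : 0 < η) (hη1 : η < 1) :
    Real.logb 2 ((1 + (((1 - η) / η : ℝ) : ℂ) • (Aᴴ * A)).det.re) ≤
      n * Real.logb 2 (1 / η) := by
  set c : ℝ := (1 - η) / η with hcdef
  have hc0 : 0 ≤ c := div_nonneg (by linarith) hη0.le
  set B := A * Aᴴ with hBdef
  have hBh : B.IsHermitian := isHermitian_mul_conjTranspose_self A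
  set lam := hBh.eigenvalues with hlam
  set U : Matrix (Fin n) (Fin n) ℂ := (hBh.eigenvectorUnitary : Matrix (Fin n) (Fin n) ℂ)
    with hU
  have hUU : U * star U = 1 := (Matrix.mem_unitaryGroup_iff).mp hBh.eigenvectorUnitary.2
  have hUU' : star U * U = 1 := (Matrix.mem_unitaryGroup_iff').mp hBh.eigenvectorUnitary.2
  have hspec : B = U * Matrix.diagonal (RCLike.ofReal ∘ lam) * star U := hBh.spectral_theorem
  -- determinant identity
  have hdet1 : (1 + ((c:ℂ)) • (Aᴴ * A)).det = (1 + (c:ℂ) • B).det := by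
    rw [← Matrix.smul_mul, Matrix.det_one_add_mul_comm, Matrix.mul_smul]
  -- diagonalize
  have hconj : 1 + (c:ℂ) • B = U * (1 + (c:ℂ) • Matrix.diagonal (RCLike.ofReal ∘ lam)) * star U := by
    rw [Matrix.mul_add, Matrix.add_mul, Matrix.mul_one, hUU, Matrix.mul_smul,
      Matrix.smul_mul, ← hspec]
  have hdet2 : (1 + (c:ℂ) • B).det
      = ((1 + (c:ℂ) • Matrix.diagonal (RCLike.ofReal ∘ lam) : Matrix (Fin n) (Fin n) ℂ)).det := by
    rw [hconj, Matrix.det_mul, Matrix.det_mul, mul_comm, ← mul_assoc, ← Matrix.det_mul, hUU',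
      Matrix.det_one, one_mul]
  have hdet3 : ((1 + (c:ℂ) • Matrix.diagonal (RCLike.ofReal ∘ lam) : Matrix (Fin n) (Fin n) ℂ)).det
      = ((∏ i, (1 + c * lam i) : ℝ) : ℂ) := by
    rw [← Matrix.diagonal_one, ← Matrix.diagonal_smul, Matrix.diagonal_add,
      Matrix.det_diagonal]
    push_cast
    rfl
  have hre : (1 + ((c:ℂ)) • (Aᴴ * A)).det.re = ∏ i, (1 + c * lam i) := by
    rw [hdet1, hdet2, hdet3, Complex.ofReal_re]
  -- trace identity
  have htr : ∑ i, lam i = n := by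
    have h1 : B.trace = ((n:ℝ):ℂ) := by
      rw [Matrix.trace]
      have : ∀ i, Matrix.diag B i = ((1:ℝ):ℂ) := by
        intro i
        simp only [hBdef, Matrix.diag_apply, Matrix.mul_apply, Matrix.conjTranspose_apply]
        have : ∀ j, A i j * star (A i j) = ((Complex.normSq (A i j) : ℝ) : ℂ) := by
          intro j; rw [← Complex.mul_conj]; rfl
        rw [Finset.sum_congr rfl fun j _ => this j, ← Complex.ofReal_sum, hrows i]
      rw [Finset.sum_congr rfl fun i _ => this i]
      simp
    have h2 : B.trace = ((∑ i, lam i : ℝ) : ℂ) := by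
      rw [hspec, Matrix.trace_mul_cycle, hUU', Matrix.one_mul, Matrix.trace_diagonal]
      push_cast; rfl
    rw [h2] at h1
    exact_mod_cast h1
  -- AM-GM bound
  have hbound : ∏ i, (1 + c * lam i) ≤ (1 + c) ^ n :=
    amgm_step n lam (fun i => Matrix.eigenvalues_self_mul_conjTranspose_nonneg A i) htr c hc0
  have h1c : 1 + c = 1 / η := by rw [hcdef]; field_simp; ring
  have hpos : (0:ℝ) < ∏ i, (1 + c * lam i) := by
    apply Finset.prod_pos
    intro i _
    have := mul_nonneg hc0 (Matrix.eigenvalues_self_mul_conjTranspose_nonneg A i)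
    linarith
  rw [hre, ← Real.logb_pow, ← h1c]
  exact Real.logb_le_logb_of_le (by norm_num) hpos hbound
end
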